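/- For every α > 0 and γ > 1 there is a constant c > 0 (depending only on α and γ) with the following property. Let X be a finite metric space with probability mass function P positive everywhere, let C = {C_1,…,C_k} be an (α,γ)-clustering of X, let 0 < ε < α, and let A = {A_1,…,A_k} be a family of nonempty sets with A_i ⊆ C_i for every i. If d(C^γ(A), C) < ε, then C^γ(A) is an (ε, α−ε, γ−c·ε)-clustering of X. -/

import Mathlib

open Finset
open scoped Classical symmDiff

/-- `P(A)`: the probability mass of a finite set `A`. -/
noncomputable def pOf {X : Type*} (P : X → ℝ) (A : Finset X) : ℝ := ∑ x ∈ A, P x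

/-- `Δ(x,A)`: the average distance from `x` to `A`,
weighted by the probability mass function `P` restricted to `A`. -/
noncomputable def Dpt {X : Type*} [MetricSpace X] (P : X → ℝ) (x : X) (A : Finset X) : ℝ :=
  (∑ y ∈ A, P y * dist x y) / pOf P A

/-- `Δ_U(x,A)`: the (unweighted) average distance from `x` to the points of the finite set `A`. -/
noncomputable def DptU {X : Type*} [MetricSpace X] (x : X) (A : Finset X) : ℝ :=
  (∑ z ∈ A, dist x z) / (A.card : ℝ)

/-- `{C_1,…,C_k}` is an `(α,γ)`-clustering: a partition of `X` into nonempty parts, each of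
probability at least `α`, such that `Δ(x,C_j) ≥ γ·Δ(x,C_i)` for all `i ≠ j` and `x ∈ C_i`. -/
def IsGoodClustering {X : Type*} [Fintype X] [MetricSpace X] (P : X → ℝ) (α γ : ℝ)
    {k : ℕ} (C : Fin k → Finset X) : Prop :=
  (∀ i, (C i).Nonempty) ∧
  (∀ i j, i ≠ j → Disjoint (C i) (C j)) ∧
  (∀ x : X, ∃ i, x ∈ C i) ∧
  (∀ i, α ≤ pOf P (C i)) ∧
  (∀ i j, i ≠ j → ∀ x ∈ C i, γ * Dpt P x (C i) ≤ Dpt P x (C j))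

/-- The "Voronoi diagram" `C^γ(A)` of a collection `A = {A_1,…,A_k}` of finite subsets:
`C_i^γ(A) = {x : ∀ j ≠ i, γ·Δ_U(x,A_i) < Δ_U(x,A_j)}`. -/
noncomputable def voronoi {X : Type*} [Fintype X] [MetricSpace X] (γ : ℝ) {k : ℕ}
    (A : Fin k → Finset X) (i : Fin k) : Finset X :=
  Finset.univ.filter (fun x => ∀ j, j ≠ i → γ * DptU x (A i) < DptU x (A j))

/-- The symmetric-difference distance between two (equal-length) collections of subsets of `X`:
the minimum over permutations `σ` of `P(∪ᵢ (Cᵢ ⊕ C'_{σ(i)}))`. -/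
noncomputable def dColl {X : Type*} [DecidableEq X] (P : X → ℝ) {k : ℕ}
    (C C' : Fin k → Finset X) : ℝ :=
  Finset.univ.inf' ⟨Equiv.refl _, Finset.mem_univ _⟩ (fun σ : Equiv.Perm (Fin k) =>
    pOf P (Finset.univ.biUnion fun i => (C i) ∆ (C' (σ i))))

/-- `{D_1,…,D_k}` is an `(ε,α',γ')`-clustering: each `D_i` has probability at least `α'`, and
there is an exceptional set `N` with `P(N) ≤ ε` such that every `x ∉ N` belongs to exactly one
`D_i` and satisfies `Δ(x,D_j) ≥ γ'·Δ(x,D_i)` for every `j ≠ i`. -/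
def IsApproxClustering {X : Type*} [Fintype X] [MetricSpace X] (P : X → ℝ) (ε α' γ' : ℝ)
    {k : ℕ} (D : Fin k → Finset X) : Prop :=
  (∀ i, α' ≤ pOf P (D i)) ∧
  ∃ N : Finset X, pOf P N ≤ ε ∧
    ∀ x : X, x ∉ N →
      (∃! i, x ∈ D i) ∧
      ∀ i, x ∈ D i → ∀ j, j ≠ i → γ' * Dpt P x (D i) ≤ Dpt P x (D j)

section helpers
set_option linter.unusedSectionVars false
variable {X : Type*} [MetricSpace X] {P : X → ℝ}

lemma pOf_nonneg' (hP : ∀ x, 0 ≤ P x) (A : Finset X) : 0 ≤ pOf P A :=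
  Finset.sum_nonneg fun x _ => hP x

lemma pOf_mono' (hP : ∀ x, 0 ≤ P x) {A B : Finset X} (h : A ⊆ B) : pOf P A ≤ pOf P B :=
  Finset.sum_le_sum_of_subset_of_nonneg h fun x _ _ => hP x

lemma pOf_le_add' [DecidableEq X] (hP : ∀ x, 0 ≤ P x) {A B C : Finset X} (h : A ⊆ B ∪ C) :
    pOf P A ≤ pOf P B + pOf P C := by
  have h1 : pOf P A ≤ pOf P (B ∪ C) := pOf_mono' hP h
  have h2 : pOf P (B ∪ C) + pOf P (B ∩ C) = pOf P B + pOf P C := Finset.sum_union_inter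
  have h3 : 0 ≤ pOf P (B ∩ C) := pOf_nonneg' hP _
  linarith

lemma Dpt_nonneg' (hP : ∀ x, 0 ≤ P x) (x : X) (A : Finset X) : 0 ≤ Dpt P x A :=
  div_nonneg (Finset.sum_nonneg fun y _ => mul_nonneg (hP y) dist_nonneg)
    (Finset.sum_nonneg fun y _ => hP y)

lemma Dpt_le_dist_add' (hP : ∀ x, 0 ≤ P x) {A : Finset X} (hA : 0 < pOf P A) (x z : X) :
    Dpt P z A ≤ dist x z + Dpt P x A := by
  have key : (∑ y ∈ A, P y * dist z y) ≤ ∑ y ∈ A, (P y * dist x z + P y * dist x y) := by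
    refine Finset.sum_le_sum fun y _ => ?_
    have h1 : dist z y ≤ dist x z + dist x y := by
      rw [dist_comm x z]; exact dist_triangle z x y
    nlinarith [mul_le_mul_of_nonneg_left h1 (hP y)]
  have h2 : (∑ y ∈ A, (P y * dist x z + P y * dist x y))
      = dist x z * pOf P A + ∑ y ∈ A, P y * dist x y := by
    rw [Finset.sum_add_distrib]
    congr 1
    rw [pOf, Finset.mul_sum]
    exact Finset.sum_congr rfl fun y _ => mul_comm _ _
  calc Dpt P z A = (∑ y ∈ A, P y * dist z y) / pOf P A := rfl
    _ ≤ (dist x z * pOf P A + ∑ y ∈ A, P y * dist x y) / pOf P A := by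
        exact div_le_div_of_nonneg_right (le_of_le_of_eq key h2) hA.le
    _ = dist x z + Dpt P x A := by
        rw [add_div, mul_div_assoc, div_self hA.ne', mul_one, Dpt]

lemma dist_le_Dpt_add' (hP : ∀ x, 0 ≤ P x) {A : Finset X} (hA : 0 < pOf P A) (x z : X) :
    dist x z ≤ Dpt P x A + Dpt P z A := by
  rw [Dpt, Dpt, ← add_div, le_div_iff₀ hA]
  have h0 : dist x z * pOf P A = ∑ y ∈ A, P y * dist x z := by
    rw [pOf, Finset.mul_sum]
    exact Finset.sum_congr rfl fun y _ => mul_comm _ _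
  rw [h0, ← Finset.sum_add_distrib]
  refine Finset.sum_le_sum fun y _ => ?_
  have h1 : dist x z ≤ dist x y + dist z y := by
    rw [dist_comm z y]; exact dist_triangle x y z
  nlinarith [mul_le_mul_of_nonneg_left h1 (hP y)]

lemma DptU_le_dist_add' {A : Finset X} (hA : A.Nonempty) (x z : X) :
    DptU z A ≤ dist x z + DptU x A := by
  have hc : (0:ℝ) < A.card := by exact_mod_cast Finset.card_pos.mpr hA
  have key : (∑ y ∈ A, dist z y) ≤ ∑ y ∈ A, (dist x z + dist x y) := by
    refine Finset.sum_le_sum fun y _ => ?_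
    rw [dist_comm x z]; exact dist_triangle z x y
  have h2 : (∑ y ∈ A, (dist x z + dist x y)) = dist x z * A.card + ∑ y ∈ A, dist x y := by
    rw [Finset.sum_add_distrib, Finset.sum_const, nsmul_eq_mul, mul_comm]
  calc DptU z A = (∑ y ∈ A, dist z y) / A.card := rfl
    _ ≤ (dist x z * A.card + ∑ y ∈ A, dist x y) / A.card :=
        div_le_div_of_nonneg_right (le_of_le_of_eq key h2) hc.le
    _ = dist x z + DptU x A := by
        rw [add_div, mul_div_assoc, div_self hc.ne', mul_one, DptU]

lemma dist_le_DptU_add' {A : Finset X} (hA : A.Nonempty) (x z : X) :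
    dist x z ≤ DptU x A + DptU z A := by
  have hc : (0:ℝ) < A.card := by exact_mod_cast Finset.card_pos.mpr hA
  rw [DptU, DptU, ← add_div, le_div_iff₀ hc]
  have h0 : dist x z * A.card = ∑ _y ∈ A, dist x z := by
    rw [Finset.sum_const, nsmul_eq_mul, mul_comm]
  rw [h0, ← Finset.sum_add_distrib]
  refine Finset.sum_le_sum fun y _ => ?_
  rw [dist_comm z y]; exact dist_triangle x y z

lemma DptU_nonneg' (x : X) (A : Finset X) : 0 ≤ DptU x A :=
  div_nonneg (Finset.sum_nonneg fun y _ => dist_nonneg) (Nat.cast_nonneg _)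

end helpers

set_option maxHeartbeats 1000000 in
/-- For all `α > 0`, `γ > 1` there is `c > 0` such that: for every finite metric probability
space, every `(α,γ)`-clustering `C`, every family `A` with `A_i ⊆ C_i` nonempty, and every
`0 < ε < α`, if `d(C^γ(A), C) < ε` then `C^γ(A)` is an `(ε, α−ε, γ−c·ε)`-clustering. -/
theorem stmt_8 (α γ : ℝ) (hα : 0 < α) (hγ : 1 < γ) :
    ∃ c : ℝ, 0 < c ∧
      ∀ (X : Type) (_ : Fintype X) (_ : MetricSpace X) (_ : DecidableEq X)
        (P : X → ℝ), (∀ x, 0 < P x) → (∑ x, P x = 1) →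
        ∀ (k : ℕ) (C A : Fin k → Finset X),
          IsGoodClustering P α γ C →
          (∀ i, (A i).Nonempty) → (∀ i, A i ⊆ C i) →
          ∀ ε : ℝ, 0 < ε → ε < α →
            dColl P (voronoi γ A) C < ε →
            IsApproxClustering P ε (α - ε) (γ - c * ε) (voronoi γ A) := by
  have hγ0 : (0:ℝ) < γ := by linarith
  have hγ1 : (0:ℝ) < γ - 1 := by linarith
  set K1 : ℝ := (γ + 1) / (γ - 1) with hK1
  set K2 : ℝ := 2 * γ * (γ + 1) / (γ - 1) ^ 3 with hK2
  have hK1pos : 0 < K1 := div_pos (by linarith) hγ1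
  have hK2pos : 0 < K2 :=
    div_pos (mul_pos (by linarith : (0:ℝ) < 2 * γ) (by linarith : (0:ℝ) < γ + 1)) (pow_pos hγ1 3)
  have hIn : (0:ℝ) < 2 + K1 + γ * K2 * (1 + γ) := by
    have := mul_pos (mul_pos hγ0 hK2pos) (show (0:ℝ) < 1 + γ by linarith)
    linarith
  set c : ℝ := 1 + γ * K1 / α + γ * (2 + K1 + γ * K2 * (1 + γ)) / α ^ 2 with hc_def
  have hc1 : 0 < γ * K1 / α := div_pos (mul_pos hγ0 hK1pos) hα
  have hc2 : 0 < γ * (2 + K1 + γ * K2 * (1 + γ)) / α ^ 2 :=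
    div_pos (mul_pos hγ0 hIn) (pow_pos hα 2)
  have hcpos : 0 < c := by rw [hc_def]; linarith
  have hcge1 : 1 ≤ c := by rw [hc_def]; linarith
  have dK1 : K1 * (γ - 1) = γ + 1 := by rw [hK1]; field_simp
  have dK2 : K2 * (γ - 1) ^ 3 = 2 * γ * (γ + 1) := by rw [hK2]; field_simp
  have dc : c * α ^ 2 = α ^ 2 + γ * K1 * α + γ * (2 + K1 + γ * K2 * (1 + γ)) := by
    rw [hc_def]; field_simp
  refine ⟨c, hcpos, ?_⟩
  intro X _ _ _ P hP hP1 k C A hC hAne hAC ε hε hεα hd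
  obtain ⟨hCne, hCdisj, hCcov, hCα, hCγ⟩ := hC
  have hP0 : ∀ x, 0 ≤ P x := fun x => (hP x).le
  set D := voronoi γ A with hDdef
  unfold dColl at hd
  replace hd := (Finset.inf'_lt_iff _).mp hd
  obtain ⟨σ, -, hσ⟩ := hd
  set N := Finset.univ.biUnion (fun i => (D i) ∆ (C (σ i))) with hNdef
  have hN : pOf P N ≤ ε := hσ.le
  have hmem : ∀ y, y ∉ N → ∀ i, (y ∈ D i ↔ y ∈ C (σ i)) := by
    intro y hy i
    have hns : y ∉ (D i) ∆ (C (σ i)) :=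
      fun h => hy (Finset.mem_biUnion.mpr ⟨i, Finset.mem_univ i, h⟩)
    rw [Finset.mem_symmDiff] at hns
    constructor
    · intro h; by_contra h'; exact hns (Or.inl ⟨h, h'⟩)
    · intro h; by_contra h'; exact hns (Or.inr ⟨h, h'⟩)
  have hsub1 : ∀ i, C (σ i) \ N ⊆ D i := by
    intro i y hy
    rw [Finset.mem_sdiff] at hy
    exact (hmem y hy.2 i).mpr hy.1
  have hsdiffN : ∀ (T : Finset X), T ⊆ (T \ N) ∪ N := by
    intro T y hy
    rw [Finset.mem_union, Finset.mem_sdiff]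
    by_cases h : y ∈ N
    · exact Or.inr h
    · exact Or.inl ⟨hy, h⟩
  have hle1 : ∀ (T : Finset X), pOf P T ≤ 1 := by
    intro T
    calc pOf P T ≤ pOf P Finset.univ := pOf_mono' hP0 (Finset.subset_univ T)
      _ = 1 := hP1
  have hPD_lb : ∀ i, α - ε ≤ pOf P (D i) := by
    intro i
    have h1 : pOf P (C (σ i)) ≤ pOf P (C (σ i) \ N) + pOf P N :=
      pOf_le_add' hP0 (hsdiffN _)
    have h2 : pOf P (C (σ i) \ N) ≤ pOf P (D i) := pOf_mono' hP0 (hsub1 i)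
    have h3 : α ≤ pOf P (C (σ i)) := hCα _
    linarith
  refine ⟨hPD_lb, N, hN, ?_⟩
  intro x hx
  obtain ⟨t, hxt⟩ := hCcov x
  have huniq : ∀ m, x ∈ D m → m = σ.symm t := by
    intro m hm
    have hxC : x ∈ C (σ m) := (hmem x hx m).mp hm
    have hst : σ m = t := by
      by_contra hne
      exact (Finset.disjoint_left.mp (hCdisj _ _ hne) hxC) hxt
    rw [← hst, Equiv.symm_apply_apply]
  have hxD : x ∈ D (σ.symm t) := (hmem x hx _).mpr (by rwa [Equiv.apply_symm_apply])
  refine ⟨⟨σ.symm t, hxD, fun m hm => huniq m hm⟩, ?_⟩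
  intro i hxDi j hji
  -- trivial branch
  by_cases hsign : γ - c * ε ≤ 0
  · have h1 : 0 ≤ Dpt P x (D j) := Dpt_nonneg' hP0 _ _
    have h2 : 0 ≤ Dpt P x (D i) := Dpt_nonneg' hP0 _ _
    calc (γ - c * ε) * Dpt P x (D i) ≤ 0 := mul_nonpos_of_nonpos_of_nonneg hsign h2
      _ ≤ Dpt P x (D j) := h1
  push_neg at hsign
  have hcε : c * ε < γ := by linarith
  have hεγ : ε ≤ γ := by
    have := mul_nonneg (show (0:ℝ) ≤ c - 1 by linarith [hcge1]) hε.le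
    linarith only [this, hcε]
  -- K1 * ε < α
  have hK1ε : K1 * ε < α := by
    have h1 : (γ * K1 / α) * ε ≤ c * ε := by
      apply mul_le_mul_of_nonneg_right _ hε.le
      rw [hc_def]; linarith
    have h2 : γ * K1 / α * ε < γ := lt_of_le_of_lt h1 hcε
    have h3 : γ * K1 * ε < γ * α := by
      rw [div_mul_eq_mul_div, div_lt_iff₀ hα] at h2
      linarith
    have h4 : γ * (K1 * ε) < γ * α := by rw [← mul_assoc]; exact h3
    exact lt_of_mul_lt_mul_left h4 hγ0.le
  have hts : σ i ≠ σ j := fun h => hji (σ.injective h).symm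
  have hxCt : x ∈ C (σ i) := (hmem x hx i).mp hxDi
  set p := pOf P (C (σ i)) with hp_def
  set q := pOf P (C (σ j)) with hq_def
  set a := Dpt P x (C (σ i)) with ha_def
  set b := Dpt P x (C (σ j)) with hb_def
  have hpα : α ≤ p := hCα _
  have hqα : α ≤ q := hCα _
  have hp1 : p ≤ 1 := hle1 _
  have hq1 : q ≤ 1 := hle1 _
  have hp0 : 0 < p := lt_of_lt_of_le hα hpα
  have hq0 : 0 < q := lt_of_lt_of_le hα hqα
  have hab : γ * a ≤ b := hCγ (σ i) (σ j) hts x hxCt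
  have ha0 : 0 ≤ a := Dpt_nonneg' hP0 _ _
  have hb0 : 0 ≤ b := Dpt_nonneg' hP0 _ _
  have hab' : a ≤ b := by
    have := mul_nonneg hγ1.le ha0
    linarith only [this, hab]
  -- bound 1 : points of C (σ j) are at distance ≤ K1 * b from x
  have hbd1m : ∀ z ∈ C (σ j), dist x z * (γ - 1) ≤ (γ + 1) * b := by
    intro z hz
    have h1 : γ * Dpt P z (C (σ j)) ≤ Dpt P z (C (σ i)) := hCγ _ _ hts.symm z hz
    have h2 : Dpt P z (C (σ i)) ≤ dist x z + a := Dpt_le_dist_add' hP0 hp0 x z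
    have h3 : dist x z ≤ b + Dpt P z (C (σ j)) := by
      have := dist_le_Dpt_add' hP0 hq0 x z
      linarith
    have h4 : γ * (dist x z - b) ≤ γ * Dpt P z (C (σ j)) :=
      mul_le_mul_of_nonneg_left (by linarith) hγ0.le
    linarith only [h1, h2, h4, hab']
  have hbd1 : ∀ z ∈ C (σ j), dist x z ≤ K1 * b := by
    intro z hz
    rw [hK1, div_mul_eq_mul_div, le_div_iff₀ hγ1]
    exact hbd1m z hz
  -- a point z₀ of C (σ j) outside N
  have hCsN : (C (σ j) \ N).Nonempty := by
    by_contra hne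
    rw [Finset.not_nonempty_iff_eq_empty] at hne
    have h1 : pOf P (C (σ j)) ≤ pOf P (C (σ j) \ N) + pOf P N := pOf_le_add' hP0 (hsdiffN _)
    rw [hne] at h1
    have h2 : pOf P (∅ : Finset X) = 0 := by simp [pOf]
    rw [h2] at h1
    linarith
  obtain ⟨z₀, hz₀⟩ := hCsN
  have hz₀Cs : z₀ ∈ C (σ j) := (Finset.mem_sdiff.mp hz₀).1
  have hz₀Dj : z₀ ∈ D j := hsub1 j hz₀
  have hz₀b : dist x z₀ * (γ - 1) ≤ (γ + 1) * b := hbd1m z₀ hz₀Cs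
  -- voronoi membership facts
  have hvor : ∀ m, ∀ y ∈ D m, ∀ l, l ≠ m → γ * DptU y (A m) < DptU y (A l) := by
    intro m y hy l hl
    rw [hDdef, voronoi, Finset.mem_filter] at hy
    exact hy.2 l hl
  set u := DptU x (A j) with hu_def
  have hu0 : 0 ≤ u := DptU_nonneg' _ _
  have hxu : γ * DptU x (A i) < u := hvor i x hxDi j hji
  have hzv : γ * DptU z₀ (A j) < DptU z₀ (A i) := hvor j z₀ hz₀Dj i (Ne.symm hji)
  have h5 : DptU z₀ (A i) ≤ dist x z₀ + DptU x (A i) := DptU_le_dist_add' (hAne i) x z₀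
  have h6 : u ≤ dist x z₀ + DptU z₀ (A j) := by
    have h := DptU_le_dist_add' (hAne j) z₀ x
    rwa [dist_comm] at h
  have hu3 : u * ((γ - 1) * (γ + 1)) ≤ dist x z₀ * (γ * (γ + 1)) := by
    have e1 : γ * (γ * DptU z₀ (A j)) ≤ γ * (dist x z₀ + DptU x (A i)) :=
      mul_le_mul_of_nonneg_left (le_trans hzv.le h5) hγ0.le
    have e2 : (γ * γ) * u ≤ (γ * γ) * (dist x z₀ + DptU z₀ (A j)) :=
      mul_le_mul_of_nonneg_left h6 (mul_nonneg hγ0.le hγ0.le)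
    linarith only [e1, e2, hxu.le]
  -- bound 2 : points of D i are at distance ≤ K2 * b from x
  have hbd2 : ∀ y ∈ D i, dist x y ≤ K2 * b := by
    intro y hy
    have hvy : γ * DptU y (A i) < DptU y (A j) := hvor i y hy j hji
    have t1 : dist x y ≤ DptU x (A i) + DptU y (A i) := dist_le_DptU_add' (hAne i) x y
    have t2 : DptU y (A j) ≤ dist x y + u := DptU_le_dist_add' (hAne j) x y
    have e1 : dist x y * (γ - 1) ≤ 2 * u := by
      have h7 : γ * dist x y ≤ γ * (DptU x (A i) + DptU y (A i)) :=
        mul_le_mul_of_nonneg_left t1 hγ0.le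
      linarith only [h7, hvy.le, t2, hxu.le]
    rw [hK2, div_mul_eq_mul_div, le_div_iff₀ (pow_pos hγ1 3)]
    -- dist x y * (γ-1)^3 ≤ 2*γ*(γ+1)*b ; multiply chain by (γ+1) and cancel
    have hγp1 : (0:ℝ) < γ + 1 := by linarith
    have key : dist x y * (γ - 1) ^ 3 * (γ + 1) ≤ 2 * γ * (γ + 1) * b * (γ + 1) := by
      have n1 : (0:ℝ) ≤ (γ - 1) ^ 2 * (γ + 1) := mul_nonneg (sq_nonneg _) hγp1.le
      have g1 : (dist x y * (γ - 1)) * ((γ - 1) ^ 2 * (γ + 1)) ≤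
          (2 * u) * ((γ - 1) ^ 2 * (γ + 1)) :=
        mul_le_mul_of_nonneg_right e1 n1
      have g2 : (u * ((γ - 1) * (γ + 1))) * (2 * (γ - 1)) ≤
          (dist x z₀ * (γ * (γ + 1))) * (2 * (γ - 1)) :=
        mul_le_mul_of_nonneg_right hu3 (by linarith)
      have g3 : (dist x z₀ * (γ - 1)) * (2 * γ * (γ + 1)) ≤
          ((γ + 1) * b) * (2 * γ * (γ + 1)) :=
        mul_le_mul_of_nonneg_right hz₀b (mul_nonneg (by linarith : (0:ℝ) ≤ 2 * γ) (by linarith : (0:ℝ) ≤ γ + 1))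
      calc dist x y * (γ - 1) ^ 3 * (γ + 1)
          = (dist x y * (γ - 1)) * ((γ - 1) ^ 2 * (γ + 1)) := by ring
        _ ≤ (2 * u) * ((γ - 1) ^ 2 * (γ + 1)) := g1
        _ = (u * ((γ - 1) * (γ + 1))) * (2 * (γ - 1)) := by ring
        _ ≤ (dist x z₀ * (γ * (γ + 1))) * (2 * (γ - 1)) := g2
        _ = (dist x z₀ * (γ - 1)) * (2 * γ * (γ + 1)) := by ring
        _ ≤ ((γ + 1) * b) * (2 * γ * (γ + 1)) := g3
        _ = 2 * γ * (γ + 1) * b * (γ + 1) := by ring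
    exact le_of_mul_le_mul_right key hγp1
  -- sum machinery
  set S : Finset X → ℝ := fun T => ∑ y ∈ T, P y * dist x y with hS_def
  have hSnonneg : ∀ T, 0 ≤ S T :=
    fun T => Finset.sum_nonneg fun y _ => mul_nonneg (hP0 y) dist_nonneg
  have hSmono : ∀ {T U : Finset X}, T ⊆ U → S T ≤ S U :=
    fun h => Finset.sum_le_sum_of_subset_of_nonneg h fun y _ _ => mul_nonneg (hP0 y) dist_nonneg
  have hDpt_eq : ∀ T : Finset X, Dpt P x T = S T / pOf P T := fun T => rfl
  have hSbound : ∀ (T : Finset X) (M : ℝ), 0 ≤ M → (∀ y ∈ T, dist x y ≤ M) →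
      S T ≤ pOf P T * M := by
    intro T M hM hb
    calc S T ≤ ∑ y ∈ T, P y * M :=
          Finset.sum_le_sum fun y hy => mul_le_mul_of_nonneg_left (hb y hy) (hP0 y)
      _ = pOf P T * M := by rw [pOf, Finset.sum_mul]
  have hsplit : ∀ (T U : Finset X), S (T ∩ U) + S (T \ U) = S T :=
    fun T U => Finset.sum_inter_add_sum_sdiff T U _
  have hpa : S (C (σ i)) = p * a := by
    have : a = S (C (σ i)) / p := rfl
    rw [this, mul_div_cancel₀ _ hp0.ne']
  have hqb : S (C (σ j)) = q * b := by
    have : b = S (C (σ j)) / q := rfl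
    rw [this, mul_div_cancel₀ _ hq0.ne']
  have hK2b0 : 0 ≤ K2 * b := mul_nonneg hK2pos.le hb0
  have hK1b0 : 0 ≤ K1 * b := mul_nonneg hK1pos.le hb0
  -- S (D i) ≤ p*a + ε*(K2*b)
  have hDiN : D i \ C (σ i) ⊆ N := by
    intro y hy
    rw [Finset.mem_sdiff] at hy
    by_contra hyN
    exact hy.2 ((hmem y hyN i).mp hy.1)
  have hSDi : S (D i) ≤ p * a + ε * (K2 * b) := by
    have h1 : S (D i ∩ C (σ i)) ≤ S (C (σ i)) := hSmono Finset.inter_subset_right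
    have h3 : S (D i \ C (σ i)) ≤ pOf P (D i \ C (σ i)) * (K2 * b) :=
      hSbound _ _ hK2b0 (fun y hy => hbd2 y (Finset.mem_sdiff.mp hy).1)
    have h4 : pOf P (D i \ C (σ i)) ≤ ε := le_trans (pOf_mono' hP0 hDiN) hN
    have h5 : pOf P (D i \ C (σ i)) * (K2 * b) ≤ ε * (K2 * b) :=
      mul_le_mul_of_nonneg_right h4 hK2b0
    have h6 := hsplit (D i) (C (σ i))
    rw [hpa] at h1
    linarith
  -- S (D j) ≥ q*b - ε*(K1*b)
  have hSDj : q * b - ε * (K1 * b) ≤ S (D j) := by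
    have h1 : S (C (σ j) \ N) ≤ S (D j) := hSmono (hsub1 j)
    have h2 : S (C (σ j) ∩ N) ≤ pOf P (C (σ j) ∩ N) * (K1 * b) :=
      hSbound _ _ hK1b0 (fun y hy => hbd1 y (Finset.mem_inter.mp hy).1)
    have h3 : pOf P (C (σ j) ∩ N) ≤ ε :=
      le_trans (pOf_mono' hP0 Finset.inter_subset_right) hN
    have h4 : pOf P (C (σ j) ∩ N) * (K1 * b) ≤ ε * (K1 * b) :=
      mul_le_mul_of_nonneg_right h3 hK1b0
    have h5 := hsplit (C (σ j)) N
    rw [hqb] at h5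
    linarith
  -- masses
  have hPDj_ub : pOf P (D j) ≤ q + ε := by
    have hsub : D j ⊆ C (σ j) ∪ N := by
      intro y hy
      rw [Finset.mem_union]
      by_cases h : y ∈ N
      · exact Or.inr h
      · exact Or.inl ((hmem y h j).mp hy)
    have h1 := pOf_le_add' hP0 hsub
    rw [hq_def]
    linarith only [h1, hN]
  have hPDi_lb : p - ε ≤ pOf P (D i) := by
    have h1 : pOf P (C (σ i)) ≤ pOf P (C (σ i) \ N) + pOf P N := pOf_le_add' hP0 (hsdiffN _)
    have h2 : pOf P (C (σ i) \ N) ≤ pOf P (D i) := pOf_mono' hP0 (hsub1 i)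
    linarith
  have hPDi0 : 0 < pOf P (D i) := lt_of_lt_of_le (by linarith) (hPD_lb i)
  have hPDj0 : 0 < pOf P (D j) := lt_of_lt_of_le (by linarith) (hPD_lb j)
  -- core scalar inequality
  have hcε0 : 0 ≤ c * ε := mul_nonneg hcpos.le hε.le
  have hγεK2 : 0 ≤ γ * ε * K2 := mul_nonneg (mul_nonneg hγ0.le hε.le) hK2pos.le
  have A2 : α ^ 2 ≤ p * q := by
    have := mul_le_mul hpα hqα hα.le (le_trans hα.le hpα)
    calc α ^ 2 = α * α := sq α
      _ ≤ p * q := this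
  have A1 : c * ε * (p * q) ≤ c * ε * ((p + γ * ε * K2) * (q + ε)) := by
    refine mul_le_mul_of_nonneg_left ?_ hcε0
    have w1 := mul_nonneg hp0.le hε.le
    have w2 := mul_nonneg hγεK2 hq0.le
    have w3 := mul_nonneg hγεK2 hε.le
    have expand : (p + γ * ε * K2) * (q + ε)
        = p * q + (p * ε + γ * ε * K2 * q + γ * ε * K2 * ε) := by ring
    rw [expand]
    linarith only [w1, w2, w3]
  have A2m : c * ε * α ^ 2 ≤ c * ε * (p * q) := mul_le_mul_of_nonneg_left A2 hcε0
  have A3 : c * ε * α ^ 2 = ε * (α ^ 2 + γ * K1 * α + γ * (2 + K1 + γ * K2 * (1 + γ))) := by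
    calc c * ε * α ^ 2 = ε * (c * α ^ 2) := by ring
      _ = ε * (α ^ 2 + γ * K1 * α + γ * (2 + K1 + γ * K2 * (1 + γ))) := by rw [dc]
  have A5 : ε * (γ * (2 + K1 + γ * K2 * (1 + γ))) ≤ c * ε * α ^ 2 := by
    rw [A3]
    have n1 : 0 ≤ ε * α ^ 2 := mul_nonneg hε.le (sq_nonneg α)
    have n2 : 0 ≤ ε * (γ * K1 * α) :=
      mul_nonneg hε.le (mul_nonneg (mul_nonneg hγ0.le hK1pos.le) hα.le)
    linarith only [n1, n2]
  have A4 : γ * ε * (p + q + K1 * p - ε * K1 + γ * K2 * q + γ * ε * K2) ≤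
      γ * ε * (2 + K1 + γ * K2 * (1 + γ)) := by
    refine mul_le_mul_of_nonneg_left ?_ (mul_nonneg hγ0.le hε.le)
    have n1 : K1 * p ≤ K1 * 1 := mul_le_mul_of_nonneg_left hp1 hK1pos.le
    have n2 : 0 ≤ ε * K1 := mul_nonneg hε.le hK1pos.le
    have n3 : γ * K2 * q ≤ γ * K2 * 1 := mul_le_mul_of_nonneg_left hq1 (mul_pos hγ0 hK2pos).le
    have n4 : ε * (γ * K2) ≤ γ * (γ * K2) :=
      mul_le_mul_of_nonneg_right hεγ (mul_pos hγ0 hK2pos).le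
    linarith only [n1, n2, n3, n4, hp1, hq1]
  have star : (γ - c * ε) * ((p + γ * ε * K2) * (q + ε)) ≤ γ * ((q - ε * K1) * (p - ε)) := by
    have hid : γ * ((q - ε * K1) * (p - ε)) - (γ - c * ε) * ((p + γ * ε * K2) * (q + ε)) =
        c * ε * ((p + γ * ε * K2) * (q + ε)) -
          γ * ε * (p + q + K1 * p - ε * K1 + γ * K2 * q + γ * ε * K2) := by ring
    have chain : γ * ε * (p + q + K1 * p - ε * K1 + γ * K2 * q + γ * ε * K2) ≤
        c * ε * ((p + γ * ε * K2) * (q + ε)) := by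
      calc γ * ε * (p + q + K1 * p - ε * K1 + γ * K2 * q + γ * ε * K2)
          ≤ γ * ε * (2 + K1 + γ * K2 * (1 + γ)) := A4
        _ = ε * (γ * (2 + K1 + γ * K2 * (1 + γ))) := by ring
        _ ≤ c * ε * α ^ 2 := A5
        _ ≤ c * ε * (p * q) := A2m
        _ ≤ c * ε * ((p + γ * ε * K2) * (q + ε)) := A1
    linarith only [hid, chain]
  have hMcore : (γ - c * ε) * (p * a + ε * (K2 * b)) * (q + ε) ≤ (q - ε * K1) * b * (p - ε) := by
    have hqε0 : (0:ℝ) ≤ q + ε := by linarith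
    have hsgn : (0:ℝ) ≤ γ - c * ε := by linarith
    have hγa : γ * (p * a) ≤ p * b := by
      have := mul_le_mul_of_nonneg_left hab hp0.le
      linarith only [this]
    have step : γ * ((γ - c * ε) * (p * a + ε * (K2 * b)) * (q + ε)) ≤
        γ * ((q - ε * K1) * b * (p - ε)) := by
      calc γ * ((γ - c * ε) * (p * a + ε * (K2 * b)) * (q + ε))
          = (γ - c * ε) * ((γ * (p * a) + γ * ε * (K2 * b)) * (q + ε)) := by ring
        _ ≤ (γ - c * ε) * ((p * b + γ * ε * (K2 * b)) * (q + ε)) := by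
            refine mul_le_mul_of_nonneg_left (mul_le_mul_of_nonneg_right ?_ hqε0) hsgn
            linarith
        _ = b * ((γ - c * ε) * ((p + γ * ε * K2) * (q + ε))) := by ring
        _ ≤ b * (γ * ((q - ε * K1) * (p - ε))) := mul_le_mul_of_nonneg_left star hb0
        _ = γ * ((q - ε * K1) * b * (p - ε)) := by ring
    exact le_of_mul_le_mul_left step hγ0
  -- finish
  have hqK1pos : 0 < q - ε * K1 := by
    have : ε * K1 = K1 * ε := mul_comm _ _
    linarith [hK1ε]
  rw [hDpt_eq (D i), hDpt_eq (D j), ← mul_div_assoc, div_le_div_iff₀ hPDi0 hPDj0]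
  have B1 : (γ - c * ε) * S (D i) * pOf P (D j) ≤
      (γ - c * ε) * (p * a + ε * (K2 * b)) * (q + ε) := by
    refine mul_le_mul ?_ hPDj_ub (pOf_nonneg' hP0 _) ?_
    · exact mul_le_mul_of_nonneg_left hSDi (by linarith)
    · exact mul_nonneg (by linarith) (le_trans (hSnonneg _) hSDi)
  have hSDj' : (q - ε * K1) * b ≤ S (D j) := by
    have : (q - ε * K1) * b = q * b - ε * (K1 * b) := by ring
    rw [this]; exact hSDj
  have B2 : (q - ε * K1) * b * (p - ε) ≤ S (D j) * pOf P (D i) :=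
    mul_le_mul hSDj' hPDi_lb (by linarith) (hSnonneg _)
  linarith only [B1, hMcore, B2]
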